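/- Let A be a bounded positive operator on a complex Hilbert space H with trivial kernel and let U be a unitary operator on H such that AU is also positive. Then U is the identity operator. -/
import Mathlib


open ContinuousLinearMap

set_option synthInstance.maxHeartbeats 1000000
set_option maxHeartbeats 1000000

/-- If `A` is a bounded positive injective operator and `U` is unitary with `AU` positive,
then `U` is the identity. -/
theorem stmt2 {H : Type*} [NormedAddCommGroup H] [InnerProductSpace ℂ H] [CompleteSpace H]
    (A U : H →L[ℂ] H) (hA : A.IsPositive) (hAinj : Function.Injective A)
    (hUiso : ∀ x, ‖U x‖ = ‖x‖) (hUsurj : Function.Surjective U)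
    (hAU : (A ∘L U).IsPositive) :
    U = 1 := by
  have hUadj : adjoint U ∘L U = 1 := (norm_map_iff_adjoint_comp_self U).mp hUiso
  have hUU : U ∘L adjoint U = 1 := by
    ext y
    obtain ⟨x, rfl⟩ := hUsurj y
    have hx : adjoint U (U x) = x := congrFun (congrArg DFunLike.coe hUadj) x
    simpa using congrArg U hx
  have hBsa : adjoint (A ∘L U) = A ∘L U := hAU.isSelfAdjoint
  have hAsa : adjoint A = A := hA.isSelfAdjoint
  have hstar : adjoint U ∘L A = A ∘L U := by
    rw [← hBsa, adjoint_comp, hAsa]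
  have hsq : (A ∘L U) * (A ∘L U) = A * A := by
    have : (A ∘L U) * (A ∘L U) = (A ∘L U) ∘L (adjoint U ∘L A) := by rw [hstar]; rfl
    rw [this]
    calc (A ∘L U) ∘L (adjoint U ∘L A) = A ∘L ((U ∘L adjoint U) ∘L A) := by
          simp [ContinuousLinearMap.comp_assoc]
      _ = A ∘L A := by rw [hUU]; ext x; simp
      _ = A * A := rfl
  have hB0 : (0 : H →L[ℂ] H) ≤ A ∘L U := (nonneg_iff_isPositive _).mpr hAU
  have hA0 : (0 : H →L[ℂ] H) ≤ A := (nonneg_iff_isPositive _).mpr hA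
  have h1 : CFC.sqrt (A * A) = A ∘L U := CFC.sqrt_unique hsq hB0
  have h2 : CFC.sqrt (A * A) = A := CFC.sqrt_mul_self A hA0
  have hAU_eq : A ∘L U = A := by rw [← h1, h2]
  ext x
  have : A (U x) = A x := congrFun (congrArg DFunLike.coe hAU_eq) x
  simpa using hAinj this
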